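/- Let g be the full strictly upper-triangular n × n matrices over F_q and T ∈ gᵗ a monomial matrix (at most one nonzero entry in each row and each column). Suppose T has exactly one nonzero entry, at position (t, s) with s < t. Then the codimension of the stabilizer g^T = {X ∈ g | tr(T(XY − YX)) = 0 for all Y ∈ g} in g equals 2·|{r | s < r < t}| = 2(t − s − 1). -/

import Mathlib

open Matrix Module

lemma trace_stdBasisMatrix_mul {F : Type*} [Field F] {n : ℕ} (t s : Fin n) (c : F)
    (M : Matrix (Fin n) (Fin n) F) :
    trace (Matrix.single t s c * M) = c * M s t := by
  rw [Matrix.trace]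
  rw [Finset.sum_eq_single t]
  · simp [Matrix.diag]
  · intro b _ hb
    simp [Matrix.diag, Matrix.single_mul_apply_of_ne _ _ _ _ _ hb]
  · simp

lemma finrank_matrix_coord_submodule {F : Type*} [Field F] {n : ℕ}
    (P : Fin n × Fin n → Prop) [DecidablePred P]
    (W : Submodule F (Matrix (Fin n) (Fin n) F))
    (hW : ∀ M : Matrix (Fin n) (Fin n) F, M ∈ W ↔ ∀ p : Fin n × Fin n, ¬ P p → M p.1 p.2 = 0) :
    finrank F W = Fintype.card {p : Fin n × Fin n // P p} := by
  let e : W ≃ₗ[F] ({p : Fin n × Fin n // P p} → F) :=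
    { toFun := fun M p => (M : Matrix (Fin n) (Fin n) F) p.1.1 p.1.2
      map_add' := fun M N => rfl
      map_smul' := fun c M => rfl
      invFun := fun f => ⟨Matrix.of fun i j => if h : P (i, j) then f ⟨(i, j), h⟩ else 0,
        (hW _).mpr (fun p hp => by simp [hp])⟩
      left_inv := fun M => by
        ext i j
        by_cases h : P (i, j)
        · simp [h]
        · simp [h, ((hW _).mp M.2 (i, j) h)]
      right_inv := fun f => by
        ext p
        obtain ⟨⟨i, j⟩, h⟩ := p
        simp [h] }
  rw [e.finrank_eq]
  simp [finrank_pi]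

/-- For `g` the strictly upper-triangular `n × n` matrices over `F_q` and
`T = c·E_{ts}` (`c ≠ 0`, `s < t`) a monomial matrix with a single nonzero entry, the
codimension in `g` of the stabilizer `g^T = {X ∈ g | tr(T(XY − YX)) = 0 ∀ Y ∈ g}`
equals `2(t − s − 1)`. -/
theorem stmt15 {F : Type*} [Field F] [Fintype F] (n : ℕ) (s t : Fin n) (hst : s < t)
    (c : F) (hc : c ≠ 0)
    (T : Matrix (Fin n) (Fin n) F) (hTdef : T = Matrix.single t s c)
    (g : Submodule F (Matrix (Fin n) (Fin n) F))
    (hg : ∀ M : Matrix (Fin n) (Fin n) F, M ∈ g ↔ ∀ i j : Fin n, j ≤ i → M i j = 0)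
    (gT : Submodule F (Matrix (Fin n) (Fin n) F))
    (hgT : ∀ X : Matrix (Fin n) (Fin n) F,
      X ∈ gT ↔ X ∈ g ∧ ∀ Y ∈ g, trace (T * (X * Y - Y * X)) = 0) :
    finrank F g - finrank F gT = 2 * ((t : ℕ) - (s : ℕ) - 1) := by
  classical
  set bad : Fin n × Fin n → Prop :=
    fun p => (p.1 = s ∧ s < p.2 ∧ p.2 < t) ∨ (p.2 = t ∧ s < p.1 ∧ p.1 < t) with hbad
  -- characterization of g
  have hg' : ∀ M : Matrix (Fin n) (Fin n) F, M ∈ g ↔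
      ∀ p : Fin n × Fin n, ¬ (p.1 < p.2) → M p.1 p.2 = 0 := by
    intro M
    rw [hg]
    constructor
    · intro h p hp
      exact h p.1 p.2 (le_of_not_gt hp)
    · intro h i j hji
      exact h (i, j) (not_lt.mpr hji)
  -- characterization of gT
  have hgT' : ∀ X : Matrix (Fin n) (Fin n) F, X ∈ gT ↔
      ∀ p : Fin n × Fin n, ¬ (p.1 < p.2 ∧ ¬ bad p) → X p.1 p.2 = 0 := by
    intro X
    rw [hgT]
    constructor
    · rintro ⟨hXg, htr⟩ ⟨i, j⟩ hp
      rw [not_and_or, not_not, not_lt] at hp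
      rcases hp with hji | hb
      · exact (hg X).mp hXg i j hji
      · rcases hb with ⟨his, hsj, hjt⟩ | ⟨hjt', hsi, hit⟩
        · show X i j = 0
          rw [show i = s from his]
          rw [show (i, j).1 = i from rfl] at his
          -- i = s, s < j < t; use Y = E_{j t}
          have hYg : Matrix.single j t (1 : F) ∈ g := by
            rw [hg]
            intro a b hba
            apply Matrix.single_apply_of_ne
            rintro ⟨rfl, rfl⟩
            exact absurd hba (not_le.mpr hjt)
          have h0 := htr _ hYg
          rw [hTdef, trace_stdBasisMatrix_mul] at h0
          have hXY : (X * Matrix.single j t (1 : F)) s t = X s j := by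
            rw [Matrix.mul_single_apply_same, mul_one]
          have hYX : (Matrix.single j t (1 : F) * X) s t = 0 :=
            Matrix.single_mul_apply_of_ne 1 j t s t (ne_of_lt hsj) X
          rw [Matrix.sub_apply, hXY, hYX, sub_zero] at h0
          exact (mul_eq_zero.mp h0).resolve_left hc
        · -- j = t, s < i < t; use Y = E_{s i}
          show X i j = 0
          rw [show j = t from hjt']
          have hYg : Matrix.single s i (1 : F) ∈ g := by
            rw [hg]
            intro a b hba
            apply Matrix.single_apply_of_ne
            rintro ⟨rfl, rfl⟩
            exact absurd hba (not_le.mpr hsi)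
          have h0 := htr _ hYg
          rw [hTdef, trace_stdBasisMatrix_mul] at h0
          have hXY : (X * Matrix.single s i (1 : F)) s t = 0 :=
            Matrix.mul_single_apply_of_ne 1 s i s t (ne_of_gt hit) X
          have hYX : (Matrix.single s i (1 : F) * X) s t = X i t := by
            rw [Matrix.single_mul_apply_same, one_mul]
          rw [Matrix.sub_apply, hXY, hYX, zero_sub, mul_neg, neg_eq_zero] at h0
          exact (mul_eq_zero.mp h0).resolve_left hc
    · intro h
      have hXg : X ∈ g := by
        rw [hg']
        intro p hp
        exact h p (fun hq => hp hq.1)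
      refine ⟨hXg, fun Y hYg => ?_⟩
      rw [hTdef, trace_stdBasisMatrix_mul, Matrix.sub_apply]
      have h1 : (X * Y) s t = 0 := by
        rw [Matrix.mul_apply]
        apply Finset.sum_eq_zero
        intro k _
        by_cases hkt : t ≤ k
        · rw [(hg Y).mp hYg k t hkt, mul_zero]
        · by_cases hsk : s < k
          · rw [h (s, k) (fun hq => hq.2 (Or.inl ⟨rfl, hsk, not_le.mp hkt⟩)), zero_mul]
          · rw [h (s, k) (fun hq => hsk hq.1), zero_mul]
      have h2 : (Y * X) s t = 0 := by
        rw [Matrix.mul_apply]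
        apply Finset.sum_eq_zero
        intro k _
        by_cases hks : k ≤ s
        · rw [(hg Y).mp hYg s k hks, zero_mul]
        · by_cases hkt : k < t
          · rw [h (k, t) (fun hq => hq.2 (Or.inr ⟨rfl, not_le.mp hks, hkt⟩)), mul_zero]
          · rw [h (k, t) (fun hq => hkt hq.1), mul_zero]
      rw [h1, h2, sub_zero, mul_zero]
  -- compute the two finranks
  have hcg : finrank F g = Fintype.card {p : Fin n × Fin n // p.1 < p.2} :=
    finrank_matrix_coord_submodule _ g hg'
  have hcgT : finrank F gT =
      Fintype.card {p : Fin n × Fin n // p.1 < p.2 ∧ ¬ bad p} :=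
    finrank_matrix_coord_submodule _ gT hgT'
  rw [hcg, hcgT, Fintype.card_subtype, Fintype.card_subtype]
  -- counting
  set A : Finset (Fin n × Fin n) := Finset.univ.filter (fun p => p.1 < p.2) with hA
  have hsplit := Finset.card_filter_add_card_filter_not (s := A) (p := bad)
  have hfilter2 : A.filter (fun p => ¬ bad p)
      = Finset.univ.filter (fun p : Fin n × Fin n => p.1 < p.2 ∧ ¬ bad p) := by
    rw [hA, Finset.filter_filter]
  -- the bad set
  have hbadP1 : ∀ p : Fin n × Fin n, bad p → p.1 < p.2 := by
    rintro ⟨i, j⟩ (⟨rfl, hsj, _⟩ | ⟨rfl, _, hit⟩)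
    · exact hsj
    · exact hit
  have hbadset : A.filter bad
      = (Finset.Ioo s t).image (fun r => (s, r)) ∪ (Finset.Ioo s t).image (fun r => (r, t)) := by
    ext ⟨i, j⟩
    simp only [hA, Finset.mem_filter, Finset.mem_filter, Finset.mem_univ, true_and,
      Finset.mem_union, Finset.mem_image, Finset.mem_Ioo, hbad]
    constructor
    · rintro ⟨-, ⟨rfl, hsj, hjt⟩ | ⟨rfl, hsi, hit⟩⟩
      · exact Or.inl ⟨j, ⟨hsj, hjt⟩, rfl⟩
      · exact Or.inr ⟨i, ⟨hsi, hit⟩, rfl⟩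
    · rintro (⟨r, ⟨hsr, hrt⟩, hr⟩ | ⟨r, ⟨hsr, hrt⟩, hr⟩) <;>
        cases hr
      · exact ⟨hsr, Or.inl ⟨rfl, hsr, hrt⟩⟩
      · exact ⟨hrt, Or.inr ⟨rfl, hsr, hrt⟩⟩
  have hdisj : Disjoint ((Finset.Ioo s t).image (fun r => (s, r)))
      ((Finset.Ioo s t).image (fun r => (r, t))) := by
    rw [Finset.disjoint_left]
    rintro ⟨i, j⟩ h1 h2
    simp only [Finset.mem_image, Finset.mem_Ioo] at h1 h2
    obtain ⟨r1, ⟨_, hr1t⟩, hr1⟩ := h1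
    obtain ⟨r2, ⟨_, _⟩, hr2⟩ := h2
    cases hr1; cases hr2
    exact absurd rfl (ne_of_lt hr1t)
  have hcard1 : ((Finset.Ioo s t).image (fun r => (s, r))).card = (t : ℕ) - s - 1 := by
    rw [Finset.card_image_of_injective _ (fun a b h => by simpa using h), Fin.card_Ioo]
  have hcard2 : ((Finset.Ioo s t).image (fun r => (r, t))).card = (t : ℕ) - s - 1 := by
    rw [Finset.card_image_of_injective _ (fun a b h => by simpa using h), Fin.card_Ioo]
  have hbadcard : (A.filter bad).card = 2 * ((t : ℕ) - s - 1) := by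
    rw [hbadset, Finset.card_union_of_disjoint hdisj, hcard1, hcard2]
    ring
  rw [hfilter2] at hsplit
  omega
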